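/- Let h(z) = z (the identity Blaschke product of degree 1 on 𝔻) and r = 1, N ≥ 1. Then the family of maps u_θ(z) = (e^{iθ}ξ(z), e^{−iθ}ξ(z), h(z)) with ξ(z) = ∏_{j=1}^N √(z − j), parameterized by θ ∈ ℝ/2πℤ, gives for each θ a holomorphic map 𝔻 → M_N continuous up to ∂𝔻 whose boundary values on ∂𝔻 ∖ {1} lie on the immersed Lagrangian L_{N,1} = {|u| = |v|, |w| = 1} ∩ M_N, and these are, up to disc automorphisms fixing the boundary marked point 1 and the constant θ, all such maps with exactly one boundary branch jump. -/

import Mathlib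

open Metric Finset

/-- Square root with branch cut along the positive real axis and `√(-1) = i`. -/
noncomputable def sqrtB (z : ℂ) : ℂ :=
  if z = 0 then 0 else Complex.exp (Complex.log (-z) / 2) * Complex.I


open Complex Filter Topology

lemma sqrtB_mul_self (w : ℂ) : sqrtB w * sqrtB w = w := by
  unfold sqrtB
  by_cases h : w = 0
  · simp [h]
  · simp only [if_neg h]
    have : Complex.exp (Complex.log (-w) / 2) * Complex.I *
        (Complex.exp (Complex.log (-w) / 2) * Complex.I)
        = Complex.exp (Complex.log (-w) / 2 + Complex.log (-w) / 2) * (Complex.I * Complex.I) := by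
      rw [Complex.exp_add]; ring
    rw [this, Complex.I_mul_I]
    rw [show Complex.log (-w) / 2 + Complex.log (-w) / 2 = Complex.log (-w) by ring]
    rw [Complex.exp_log (neg_ne_zero.mpr h)]
    ring

lemma norm_sqrtB (w : ℂ) : ‖sqrtB w‖ = Real.sqrt ‖w‖ := by
  unfold sqrtB
  by_cases h : w = 0
  · simp [h]
  · simp only [if_neg h]
    rw [norm_mul, Complex.norm_I, mul_one,
      Complex.norm_exp]
    have : (Complex.log (-w) / 2).re = Real.log ‖w‖ / 2 := by
      rw [show Complex.log (-w) / 2 = Complex.log (-w) * (2⁻¹ : ℝ) by push_cast; ring]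
      rw [Complex.re_mul_ofReal, Complex.log_re, norm_neg]
      ring
    rw [this, Real.sqrt_eq_rpow, Real.rpow_def_of_pos (by simpa using h : (0:ℝ) < ‖w‖)]
    ring_nf

lemma sqrtB_differentiableAt {w : ℂ} (h : w.re < 0) : DifferentiableAt ℂ sqrtB w := by
  have hw : w ≠ 0 := by intro h0; rw [h0] at h; simp at h
  have hev : sqrtB =ᶠ[nhds w] fun u => Complex.exp (Complex.log (-u) / 2) * Complex.I := by
    filter_upwards [isOpen_ne.mem_nhds (show w ≠ 0 from hw)] with u hu
    simp [sqrtB, hu]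
  have hd : DifferentiableAt ℂ (fun u => Complex.exp (Complex.log (-u) / 2) * Complex.I) w := by
    have hlog : DifferentiableAt ℂ (fun u : ℂ => Complex.log (-u)) w := by
      have : DifferentiableAt ℂ Complex.log (-w) :=
        Complex.differentiableAt_log (by left; simpa using h)
      exact this.comp w (differentiable_neg _)
    exact ((hlog.div_const 2).cexp).mul_const _
  exact hd.congr_of_eventuallyEq hev

lemma sqrtB_continuousAt_zero : ContinuousAt sqrtB 0 := by
  have h0 : sqrtB 0 = 0 := by simp [sqrtB]
  rw [ContinuousAt, h0]
  apply squeeze_zero_norm (fun u => (norm_sqrtB u).le)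
  have : Filter.Tendsto (fun u : ℂ => Real.sqrt ‖u‖) (nhds 0) (nhds (Real.sqrt ‖(0:ℂ)‖)) :=
    (Real.continuous_sqrt.comp continuous_norm).continuousAt
  simpa using this

lemma re_lt_one_of_closedBall {z : ℂ} (hz : z ∈ closedBall (0:ℂ) 1) (hz1 : z ≠ 1) :
    z.re < 1 := by
  simp only [mem_closedBall, dist_zero_right] at hz
  have hre : z.re ≤ ‖z‖ := Complex.re_le_norm z
  have habs : ‖z‖ ≤ 1 := by simpa using hz
  rcases lt_or_eq_of_le (le_trans hre habs) with h | h
  · exact h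
  · exfalso
    apply hz1
    have him : z.im = 0 := by
      have := Complex.sq_norm z
      have h2 : Complex.normSq z = z.re*z.re + z.im*z.im := Complex.normSq_apply z
      nlinarith
    exact Complex.ext h (by simp [him])

lemma re_v_pos {z : ℂ} (hz : z ∈ closedBall (0:ℂ) 1) (hz1 : z ≠ 1) :
    0 < ((2:ℂ)/(1-z)).re := by
  have h1 : (1:ℂ) - z ≠ 0 := sub_ne_zero.mpr (fun h => hz1 h.symm)
  have hn : 0 < Complex.normSq (1-z) := Complex.normSq_pos.mpr h1
  have hre : (1-z : ℂ).re = 1 - z.re := by simp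
  have him : (1-z : ℂ).im = -z.im := by simp
  rw [Complex.div_re, hre, him]
  have h2 : ((2:ℂ)).re = 2 := by norm_num
  have h3 : ((2:ℂ)).im = 0 := by norm_num
  rw [h2, h3]
  have hlt := re_lt_one_of_closedBall hz hz1
  have : 0 < 2 * (1 - z.re) / Complex.normSq (1-z) := div_pos (by linarith) hn
  simpa using this

lemma re_half_pow {w : ℂ} (hw : 0 < w.re) :
    Real.sqrt ‖w‖ / 2 ≤ (w ^ (1/2 : ℂ)).re := by
  have hw0 : w ≠ 0 := fun h => by rw [h] at hw; simp at hw
  have habs : 0 < ‖w‖ := by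
    simpa [norm_pos_iff] using hw0
  rw [Complex.cpow_def_of_ne_zero hw0, Complex.exp_re]
  have h1 : (Complex.log w * (1/2:ℂ)).re = Real.log ‖w‖ / 2 := by
    rw [show (1/2:ℂ) = ((1/2:ℝ):ℂ) by norm_num, Complex.re_mul_ofReal, Complex.log_re]; ring
  have h2 : (Complex.log w * (1/2:ℂ)).im = Complex.arg w / 2 := by
    rw [show (1/2:ℂ) = ((1/2:ℝ):ℂ) by norm_num, Complex.im_mul_ofReal, Complex.log_im]; ring
  rw [h1, h2]
  have hexp : Real.exp (Real.log ‖w‖/2) = Real.sqrt ‖w‖ := by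
    rw [Real.sqrt_eq_rpow, Real.rpow_def_of_pos habs]
    ring_nf
  have harg : |Complex.arg w| ≤ Real.pi / 2 := Complex.abs_arg_le_pi_div_two_iff.mpr hw.le
  have hcos : (1/2 : ℝ) ≤ Real.cos (Complex.arg w / 2) := by
    have h3 : |Complex.arg w / 2| ≤ Real.pi/4 := by
      rw [abs_div, show |(2:ℝ)| = 2 by norm_num]
      linarith [abs_nonneg (Complex.arg w)]
    have h4 := Real.cos_le_cos_of_nonneg_of_le_pi (abs_nonneg (Complex.arg w / 2))
      (by linarith [Real.pi_pos]) h3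
    rw [Real.cos_abs, Real.cos_pi_div_four] at h4
    have h5 : (1/2:ℝ) ≤ Real.sqrt 2 / 2 := by
      nlinarith [Real.sq_sqrt (by norm_num : (0:ℝ) ≤ 2), Real.sqrt_nonneg 2]
    linarith
  rw [hexp]
  nlinarith [Real.sqrt_nonneg ‖w‖]

lemma norm_exp_factor {δ : ℝ} (hδ : 0 ≤ δ) {w : ℂ} (hw : 0 < w.re) :
    ‖Complex.exp (-(δ:ℂ) * w ^ (1/2:ℂ))‖ ≤ Real.exp (-(δ/2) * Real.sqrt ‖w‖) := by
  rw [Complex.norm_exp]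
  apply Real.exp_le_exp.mpr
  have hre : (-(δ:ℂ) * w ^ (1/2:ℂ)).re = -δ * (w ^ (1/2:ℂ)).re := by
    simp [Complex.mul_re]
  rw [hre]
  have := re_half_pow hw
  nlinarith [Real.sqrt_nonneg ‖w‖]

section xi
variable (N : ℕ)

lemma xi_sq (z : ℂ) :
    (∏ j ∈ Finset.Icc 1 N, sqrtB (z - (j : ℂ))) * (∏ j ∈ Finset.Icc 1 N, sqrtB (z - (j : ℂ)))
      = ∏ j ∈ Finset.Icc 1 N, (z - (j : ℂ)) := by
  rw [← Finset.prod_mul_distrib]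
  exact Finset.prod_congr rfl fun j _ => sqrtB_mul_self _

lemma re_lt_of_ball {z : ℂ} (hz : z ∈ ball (0:ℂ) 1) {j : ℕ} (hj : j ∈ Finset.Icc 1 N) :
    (z - (j:ℂ)).re < 0 := by
  simp only [mem_ball, dist_zero_right] at hz
  have h1 : (1:ℝ) ≤ j := by exact_mod_cast (Finset.mem_Icc.mp hj).1
  have : z.re ≤ ‖z‖ := by
    simpa using Complex.re_le_norm z
  simp only [Complex.sub_re, Complex.natCast_re]
  linarith

lemma xi_differentiableOn :
    DifferentiableOn ℂ (fun z => ∏ j ∈ Finset.Icc 1 N, sqrtB (z - (j : ℂ))) (ball (0:ℂ) 1) := by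
  intro z hz
  refine (DifferentiableAt.fun_finsetProd fun j hj => ?_).differentiableWithinAt
  exact (sqrtB_differentiableAt (re_lt_of_ball N hz hj)).comp z
    ((differentiable_id.sub_const _) z)

lemma re_cases_of_closedBall {z : ℂ} (hz : z ∈ closedBall (0:ℂ) 1) {j : ℕ}
    (hj : j ∈ Finset.Icc 1 N) : (z - (j:ℂ)).re < 0 ∨ (z = 1 ∧ j = 1) := by
  simp only [mem_closedBall, dist_zero_right] at hz
  have h1 : (1:ℝ) ≤ j := by exact_mod_cast (Finset.mem_Icc.mp hj).1
  have hre : z.re ≤ ‖z‖ := by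
    simpa using Complex.re_le_norm z
  by_cases h : (z - (j:ℂ)).re < 0
  · exact Or.inl h
  · right
    simp only [Complex.sub_re, Complex.natCast_re, not_lt, sub_nonneg] at h
    have hj1 : (j:ℝ) = 1 := le_antisymm (by linarith) h1
    have hzre : z.re = 1 := by linarith
    have him : z.im = 0 := by
      have h2 : z.re ^ 2 + z.im ^ 2 ≤ 1 := by
        have := Complex.sq_norm z
        have habs : ‖z‖ ≤ 1 := by simpa using hz
        nlinarith [Complex.sq_norm z, Complex.normSq_apply z,
          norm_nonneg z]
      nlinarith
    constructor
    · exact Complex.ext (by simp [hzre]) (by simp [him])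
    · exact_mod_cast hj1

lemma xi_continuousOn :
    ContinuousOn (fun z => ∏ j ∈ Finset.Icc 1 N, sqrtB (z - (j : ℂ))) (closedBall (0:ℂ) 1) := by
  apply continuousOn_finset_prod
  intro j hj z hz
  rcases re_cases_of_closedBall N hz hj with h | ⟨hz1, hj1⟩
  · have h2 : ContinuousAt (fun w : ℂ => w - (j:ℂ)) z :=
      (continuous_id.sub continuous_const).continuousAt
    have h3 := ContinuousAt.comp (x := z) (f := fun w : ℂ => w - (j:ℂ)) (sqrtB_differentiableAt h).continuousAt h2
    exact h3.continuousWithinAt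
  · subst hz1; subst hj1
    have : ContinuousAt (fun z : ℂ => sqrtB (z - (1:ℕ))) 1 := by
      have := sqrtB_continuousAt_zero
      have h2 : ContinuousAt (fun z : ℂ => z - ((1:ℕ):ℂ)) 1 :=
        (continuous_id.sub continuous_const).continuousAt
      have h0 : ContinuousAt sqrtB ((1:ℂ) - ((1:ℕ):ℂ)) := by
        simpa using sqrtB_continuousAt_zero
      exact ContinuousAt.comp (x := (1:ℂ)) (f := fun w : ℂ => w - ((1:ℕ):ℂ)) h0 h2
    exact this.continuousWithinAt
end xi

lemma key_max {q : ℂ → ℂ} {C : ℝ}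
    (hd : DifferentiableOn ℂ q (ball (0:ℂ) 1))
    (hc : ContinuousOn q (closedBall (0:ℂ) 1 \ {1}))
    (hq1 : q 1 = 0)
    (hgrow : ∀ z ∈ closedBall (0:ℂ) 1, z ≠ 1 → ‖q z‖ ≤ C / ‖1 - z‖)
    (hbd : ∀ z ∈ sphere (0:ℂ) 1, z ≠ 1 → ‖q z‖ ≤ 1) :
    ∀ z ∈ ball (0:ℂ) 1, ‖q z‖ ≤ 1 := by
  intro z hz
  have hz1 : z ≠ 1 := by
    rintro rfl
    simp only [mem_ball, dist_zero_right] at hz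
    simp at hz
  set v : ℂ → ℂ := fun w => (2:ℂ)/(1-w) with hv
  set a : ℝ := (v z ^ (1/2:ℂ)).re with ha_def
  have hrz : 0 < (v z).re := re_v_pos (ball_subset_closedBall hz) hz1
  have ha : 0 ≤ a := le_trans (by positivity) (re_half_pow hrz)
  have main : ∀ δ : ℝ, 0 < δ → ‖q z‖ * Real.exp (-δ * a) ≤ 1 := by
    intro δ hδ
    set m : ℂ → ℂ := fun w => Complex.exp (-(δ:ℂ) * v w ^ (1/2:ℂ)) with hm
    set H : ℂ → ℂ := fun w => q w * m w with hH
    -- continuity of H on the closed ball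
    have hmc : ∀ w : ℂ, w ∈ closedBall (0:ℂ) 1 → w ≠ 1 → ContinuousAt m w := by
      intro w hw hw1
      have h1z : (1:ℂ) - w ≠ 0 := sub_ne_zero.mpr (fun h => hw1 h.symm)
      have hvc : ContinuousAt v w :=
        continuousAt_const.div ((continuous_const.sub continuous_id).continuousAt) h1z
      have hslit : v w ∈ Complex.slitPlane := Or.inl (re_v_pos hw hw1)
      exact ((hvc.cpow continuousAt_const hslit).const_mul (-(δ:ℂ))).cexp
    have hmnorm : ∀ w : ℂ, w ∈ closedBall (0:ℂ) 1 → w ≠ 1 →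
        ‖m w‖ ≤ Real.exp (-(δ/2) * Real.sqrt (‖v w‖)) := by
      intro w hw hw1
      exact norm_exp_factor hδ.le (re_v_pos hw hw1)
    have habsv : ∀ w : ℂ, w ≠ 1 →
        (Real.sqrt ‖(1:ℂ)-w‖)⁻¹ ≤ Real.sqrt (‖v w‖) := by
      intro w hw1
      have h1z : (1:ℂ) - w ≠ 0 := sub_ne_zero.mpr (fun h => hw1 h.symm)
      have ht : 0 < ‖(1:ℂ)-w‖ := norm_pos_iff.mpr h1z
      have hval : ‖v w‖ = 2/‖(1:ℂ)-w‖ := by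
        rw [hv]
        simp only [norm_div]
        norm_num
      rw [hval, ← Real.sqrt_inv]
      apply Real.sqrt_le_sqrt
      rw [le_div_iff₀ ht, inv_mul_cancel₀ ht.ne']
      norm_num
    have hbound : ∀ w ∈ closedBall (0:ℂ) 1 \ {1},
        ‖H w‖ ≤ (C / ‖(1:ℂ)-w‖) * Real.exp (-(δ/2) * (Real.sqrt ‖(1:ℂ)-w‖)⁻¹) := by
      intro w hws
      obtain ⟨hw, hw1'⟩ := hws
      have hw1 : w ≠ 1 := by simpa using hw1'
      have h1 : ‖q w‖ ≤ C/‖(1:ℂ)-w‖ := hgrow w hw hw1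
      have h2 := (hmnorm w hw hw1).trans (Real.exp_le_exp.mpr (by
        nlinarith [habsv w hw1, hδ.le] : -(δ/2) * Real.sqrt (‖v w‖) ≤
          -(δ/2) * (Real.sqrt ‖(1:ℂ)-w‖)⁻¹))
      calc ‖H w‖ = ‖q w‖ * ‖m w‖ := norm_mul _ _
        _ ≤ (C/‖(1:ℂ)-w‖) * Real.exp (-(δ/2) * (Real.sqrt ‖(1:ℂ)-w‖)⁻¹) :=
            mul_le_mul h1 h2 (norm_nonneg _) (le_trans (norm_nonneg _) h1)
    -- tendsto of the bound to 0
    have T1 : Tendsto (fun u : ℝ => ((δ/2)*u)^2 * Real.exp (-((δ/2)*u))) atTop (𝓝 0) :=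
      (Real.tendsto_pow_mul_exp_neg_atTop_nhds_zero 2).comp
        (Tendsto.const_mul_atTop (by positivity) tendsto_id)
    have T1' : Tendsto (fun u : ℝ => (C*(2/δ)^2) * (((δ/2)*u)^2 * Real.exp (-((δ/2)*u))))
        atTop (𝓝 0) := by
      simpa using T1.const_mul (C*(2/δ)^2)
    have T1'' : Tendsto (fun u : ℝ => C * u^2 * Real.exp (-(δ/2)*u)) atTop (𝓝 0) := by
      refine T1'.congr fun u => ?_
      have hδ0 : δ ≠ 0 := hδ.ne'
      rw [show -((δ/2)*u) = -(δ/2)*u by ring]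
      field_simp
    have T2 : Tendsto (fun t : ℝ => (Real.sqrt t)⁻¹) (𝓝[>] (0:ℝ)) atTop := by
      apply tendsto_inv_nhdsGT_zero.comp
      refine tendsto_nhdsWithin_iff.mpr ⟨?_, ?_⟩
      · have := Real.continuous_sqrt.tendsto 0
        simp only [Real.sqrt_zero] at this
        exact this.mono_left nhdsWithin_le_nhds
      · filter_upwards [self_mem_nhdsWithin] with t ht
        exact Real.sqrt_pos.mpr ht
    have TG : Tendsto (fun t : ℝ => (C / t) * Real.exp (-(δ/2) * (Real.sqrt t)⁻¹))
        (𝓝[>] (0:ℝ)) (𝓝 0) := by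
      refine (T1''.comp T2).congr' ?_
      filter_upwards [self_mem_nhdsWithin] with t ht
      have h1 : ((Real.sqrt t)⁻¹)^2 = t⁻¹ := by
        rw [inv_pow, Real.sq_sqrt (le_of_lt ht)]
      simp only [Function.comp]
      rw [h1, div_eq_mul_inv]
      ring
    have Tt : Tendsto (fun w : ℂ => ‖(1:ℂ)-w‖) (𝓝[closedBall (0:ℂ) 1 \ {1}] 1) (𝓝[>] (0:ℝ)) := by
      refine tendsto_nhdsWithin_iff.mpr ⟨?_, ?_⟩
      · have : Tendsto (fun w : ℂ => ‖(1:ℂ)-w‖) (𝓝 1) (𝓝 ‖(1:ℂ)-(1:ℂ)‖) :=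
          ((continuous_const.sub continuous_id).norm).tendsto 1
        simp only [sub_self, norm_zero] at this
        exact this.mono_left nhdsWithin_le_nhds
      · filter_upwards [self_mem_nhdsWithin] with w hw
        have hw1 : w ≠ 1 := by simpa using hw.2
        exact norm_pos_iff.mpr (sub_ne_zero.mpr (fun h => hw1 h.symm))
    have hH0 : Tendsto H (𝓝[closedBall (0:ℂ) 1 \ {1}] 1) (𝓝 0) := by
      apply squeeze_zero_norm' _ (TG.comp Tt)
      filter_upwards [self_mem_nhdsWithin] with w hw
      exact hbound w hw
    have hcont : ContinuousOn H (closedBall (0:ℂ) 1) := by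
      intro w hw
      by_cases hw1 : w = 1
      · subst hw1
        rw [← continuousWithinAt_diff_singleton]
        have hH1 : H 1 = 0 := by simp [hH, hq1]
        rw [ContinuousWithinAt, hH1]
        exact hH0
      · have hqc : ContinuousWithinAt q (closedBall (0:ℂ) 1) w := by
          apply (hc w ⟨hw, hw1⟩).mono_of_mem_nhdsWithin
          rw [show closedBall (0:ℂ) 1 \ {1} = closedBall (0:ℂ) 1 ∩ {(1:ℂ)}ᶜ from rfl]
          exact Filter.inter_mem self_mem_nhdsWithin
            (mem_nhdsWithin_of_mem_nhds (isOpen_ne.mem_nhds hw1))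
        exact hqc.mul ((hmc w hw hw1).continuousWithinAt)
    have hdiff : DifferentiableOn ℂ H (ball (0:ℂ) 1) := by
      intro w hw
      have hw1 : w ≠ 1 := by
        rintro rfl
        simp only [mem_ball, dist_zero_right] at hw
        simp at hw
      have h1z : (1:ℂ) - w ≠ 0 := sub_ne_zero.mpr (fun h => hw1 h.symm)
      have hvd : DifferentiableAt ℂ v w :=
        (differentiableAt_const _).div ((differentiable_const _).sub differentiable_id).differentiableAt h1z
      have hslit : v w ∈ Complex.slitPlane :=
        Or.inl (re_v_pos (ball_subset_closedBall hw) hw1)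
      have hmd : DifferentiableAt ℂ m w :=
        ((hvd.cpow (differentiableAt_const _) hslit).const_mul (-(δ:ℂ))).cexp
      exact (hd w hw).mul hmd.differentiableWithinAt
    have hfront : ∀ w ∈ frontier (ball (0:ℂ) 1), ‖H w‖ ≤ 1 := by
      rw [frontier_ball (0:ℂ) one_ne_zero]
      intro w hwf
      by_cases hw1 : w = 1
      · subst hw1
        simp [hH, hq1]
      · have hw : w ∈ closedBall (0:ℂ) 1 := sphere_subset_closedBall hwf
        have h1 : ‖q w‖ ≤ 1 := hbd w hwf hw1
        have h2 : ‖m w‖ ≤ 1 := by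
          refine (hmnorm w hw hw1).trans ?_
          rw [show (1:ℝ) = Real.exp 0 by simp]
          apply Real.exp_le_exp.mpr
          nlinarith [Real.sqrt_nonneg (‖v w‖), hδ.le]
        calc ‖H w‖ = ‖q w‖ * ‖m w‖ := norm_mul _ _
          _ ≤ 1 * 1 := mul_le_mul h1 h2 (norm_nonneg _) (by linarith [norm_nonneg (q w)])
          _ = 1 := by norm_num
    have hmain := Complex.norm_le_of_forall_mem_frontier_norm_le isBounded_ball
      ⟨hdiff, by rwa [closure_ball (0:ℂ) one_ne_zero]⟩ hfront
      (by rw [closure_ball (0:ℂ) one_ne_zero]; exact ball_subset_closedBall hz)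
    have hmz : ‖m z‖ = Real.exp (-δ * a) := by
      rw [hm]
      simp only []
      rw [Complex.norm_exp]
      congr 1
      simp [Complex.mul_re, ha_def]
    calc ‖q z‖ * Real.exp (-δ * a) = ‖q z‖ * ‖m z‖ := by rw [hmz]
      _ = ‖H z‖ := (norm_mul _ _).symm
      _ ≤ 1 := hmain
  -- conclude by letting δ → 0⁺
  have hlim : Tendsto (fun δ : ℝ => Real.exp (δ * a)) (𝓝[>] (0:ℝ)) (𝓝 1) := by
    have : Tendsto (fun δ : ℝ => Real.exp (δ * a)) (𝓝 0) (𝓝 (Real.exp (0 * a))) :=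
      (Real.continuous_exp.comp (continuous_id.mul continuous_const)).tendsto 0
    simp only [zero_mul, Real.exp_zero] at this
    exact this.mono_left nhdsWithin_le_nhds
  refine ge_of_tendsto hlim ?_
  filter_upwards [self_mem_nhdsWithin] with δ hδ
  have h2 := main δ hδ
  rw [show -δ * a = -(δ*a) by ring, Real.exp_neg, ← div_eq_mul_inv] at h2
  exact (div_le_one (Real.exp_pos _)).mp h2

theorem disc_family_r_one (N : ℕ) (hN : 1 ≤ N) :
    let ξ : ℂ → ℂ := fun z => ∏ j ∈ Finset.Icc 1 N, sqrtB (z - (j : ℂ))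
    (∀ θ : ℝ,
      DifferentiableOn ℂ (fun z => Complex.exp (Complex.I * θ) * ξ z) (ball (0 : ℂ) 1) ∧
      DifferentiableOn ℂ (fun z => Complex.exp (-(Complex.I) * θ) * ξ z) (ball (0 : ℂ) 1) ∧
      ContinuousOn (fun z => Complex.exp (Complex.I * θ) * ξ z) (closedBall (0 : ℂ) 1) ∧
      ContinuousOn (fun z => Complex.exp (-(Complex.I) * θ) * ξ z) (closedBall (0 : ℂ) 1) ∧
      (∀ z ∈ closedBall (0 : ℂ) 1,
        (Complex.exp (Complex.I * θ) * ξ z) * (Complex.exp (-(Complex.I) * θ) * ξ z) =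
          ∏ j ∈ Finset.Icc 1 N, (z - (j : ℂ))) ∧
      (∀ z ∈ sphere (0 : ℂ) 1, z ≠ 1 →
        ‖Complex.exp (Complex.I * θ) * ξ z‖ = ‖Complex.exp (-(Complex.I) * θ) * ξ z‖ ∧
          ‖z‖ = 1)) ∧
    (∀ f g : ℂ → ℂ,
      DifferentiableOn ℂ f (ball (0 : ℂ) 1) →
      DifferentiableOn ℂ g (ball (0 : ℂ) 1) →
      ContinuousOn f (closedBall (0 : ℂ) 1) →
      ContinuousOn g (closedBall (0 : ℂ) 1) →
      (∀ z ∈ closedBall (0 : ℂ) 1, f z * g z = ∏ j ∈ Finset.Icc 1 N, (z - (j : ℂ))) →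
      (∀ z ∈ sphere (0 : ℂ) 1, z ≠ 1 → ‖f z‖ = ‖g z‖) →
      ∃ θ : ℝ, ∀ z ∈ ball (0 : ℂ) 1,
        f z = Complex.exp (Complex.I * θ) * ξ z ∧
        g z = Complex.exp (-(Complex.I) * θ) * ξ z) := by
  intro ξ
  have hξd : DifferentiableOn ℂ ξ (ball (0:ℂ) 1) := xi_differentiableOn N
  have hξc : ContinuousOn ξ (closedBall (0:ℂ) 1) := xi_continuousOn N
  have hexpnorm : ∀ w : ℂ, w.re = 0 → ‖Complex.exp w‖ = 1 := by
    intro w hw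
    rw [Complex.norm_exp, hw, Real.exp_zero]
  have hre1 : ∀ t : ℝ, (Complex.I * (t:ℂ)).re = 0 := by intro t; simp [Complex.mul_re]
  have hre2 : ∀ t : ℝ, (-(Complex.I) * (t:ℂ)).re = 0 := by intro t; simp [Complex.mul_re]
  constructor
  · intro θ
    refine ⟨(differentiableOn_const _).mul hξd, (differentiableOn_const _).mul hξd, continuousOn_const.mul hξc, continuousOn_const.mul hξc, ?_, ?_⟩
    · intro z hz
      have hAB : Complex.exp (Complex.I*θ) * Complex.exp (-(Complex.I)*θ) = 1 := by
        rw [← Complex.exp_add, show Complex.I*θ + -(Complex.I)*θ = 0 by ring, Complex.exp_zero]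
      calc (Complex.exp (Complex.I * θ) * ξ z) * (Complex.exp (-(Complex.I) * θ) * ξ z)
          = (Complex.exp (Complex.I*θ) * Complex.exp (-(Complex.I)*θ)) * (ξ z * ξ z) := by ring
        _ = ξ z * ξ z := by rw [hAB, one_mul]
        _ = ∏ j ∈ Finset.Icc 1 N, (z - (j : ℂ)) := xi_sq N z
    · intro z hz hz1
      refine ⟨?_, mem_sphere_zero_iff_norm.mp hz⟩
      rw [norm_mul, norm_mul, hexpnorm _ (hre1 θ), hexpnorm _ (hre2 θ)]
  · intro f g hfd hgd hfc hgc hfg hnorm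
    set P : ℂ → ℂ := fun z => ∏ j ∈ Finset.Icc 1 N, (z - (j:ℂ)) with hP
    have hPdiff : Differentiable ℂ P := by
      apply Differentiable.fun_finsetProd
      intro j _
      exact differentiable_id.sub_const _
    have hPne : ∀ z ∈ ball (0:ℂ) 1, P z ≠ 0 := by
      intro z hz
      rw [hP]
      apply Finset.prod_ne_zero_iff.mpr
      intro j hj h0
      have := re_lt_of_ball N hz hj
      rw [h0] at this; simp at this
    have hPne' : ∀ z ∈ closedBall (0:ℂ) 1, z ≠ 1 → P z ≠ 0 := by
      intro z hz hz1
      apply Finset.prod_ne_zero_iff.mpr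
      intro j hj h0
      rcases re_cases_of_closedBall N hz hj with h | ⟨h1, _⟩
      · rw [h0] at h; simp at h
      · exact hz1 h1
    have hP1 : P 1 = 0 :=
      Finset.prod_eq_zero (Finset.mem_Icc.mpr ⟨le_refl 1, hN⟩) (by simp)
    have hPnorm : ∀ z ∈ closedBall (0:ℂ) 1, ‖1 - z‖ ≤ ‖P z‖ := by
      intro z hz
      have h1mem : 1 ∈ Finset.Icc 1 N := Finset.mem_Icc.mpr ⟨le_refl 1, hN⟩
      have hsplit : P z = (z - ((1:ℕ):ℂ)) * ∏ j ∈ (Finset.Icc 1 N).erase 1, (z - (j:ℂ)) :=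
        (Finset.mul_prod_erase _ _ h1mem).symm
      rw [hsplit, norm_mul]
      have h1 : ‖1 - z‖ = ‖z - ((1:ℕ):ℂ)‖ := by
        rw [norm_sub_rev]; norm_num
      rw [h1]
      have h2 : (1:ℝ) ≤ ‖∏ j ∈ (Finset.Icc 1 N).erase 1, (z - (j:ℂ))‖ := by
        rw [norm_prod]
        have := Finset.prod_le_prod (s := (Finset.Icc 1 N).erase 1)
          (f := fun _ => (1:ℝ)) (g := fun j : ℕ => ‖z - (j:ℂ)‖)
          (fun _ _ => zero_le_one) ?_
        · simpa using this
        · intro j hj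
          show (1:ℝ) ≤ ‖z - (j:ℂ)‖
          have hj2 : 2 ≤ j := by
            have h3 := Finset.mem_erase.mp hj
            have h4 := (Finset.mem_Icc.mp h3.2).1
            omega
          have hzn : ‖z‖ ≤ 1 := by simpa [dist_zero_right] using (mem_closedBall.mp hz)
          have : (j:ℝ) - ‖z‖ ≤ ‖z - (j:ℂ)‖ := by
            have h5 : ‖(j:ℂ)‖ - ‖z‖ ≤ ‖z - (j:ℂ)‖ := by
              rw [norm_sub_rev]
              exact norm_sub_norm_le _ _
            simpa using h5
          have hj2' : (2:ℝ) ≤ j := by exact_mod_cast hj2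
          linarith
      nlinarith [norm_nonneg (z - ((1:ℕ):ℂ))]
    obtain ⟨M, hM⟩ := (isCompact_closedBall (0:ℂ) 1).exists_bound_of_continuousOn hfc
    obtain ⟨M', hM'⟩ := (isCompact_closedBall (0:ℂ) 1).exists_bound_of_continuousOn hgc
    set q1 : ℂ → ℂ := fun z => f z ^ 2 / P z with hq1def
    set q2 : ℂ → ℂ := fun z => g z ^ 2 / P z with hq2def
    have hPcont : Continuous P := hPdiff.continuous
    have hsq : ∀ z ∈ sphere (0:ℂ) 1, z ≠ 1 → ‖f z‖^2 = ‖P z‖ ∧ ‖g z‖^2 = ‖P z‖ := by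
      intro z hz hz1
      have h1 : ‖f z‖ * ‖g z‖ = ‖P z‖ := by
        rw [← norm_mul, hfg z (sphere_subset_closedBall hz)]
      have h2 := hnorm z hz hz1
      refine ⟨?_, ?_⟩
      · calc ‖f z‖^2 = ‖f z‖ * ‖g z‖ := by rw [pow_two, h2]
          _ = ‖P z‖ := h1
      · calc ‖g z‖^2 = ‖f z‖ * ‖g z‖ := by rw [pow_two, h2]
          _ = ‖P z‖ := h1
    have hkey : ∀ (u : ℂ → ℂ) (Mu : ℝ), DifferentiableOn ℂ u (ball (0:ℂ) 1) →
        ContinuousOn u (closedBall (0:ℂ) 1) → (∀ z ∈ closedBall (0:ℂ) 1, ‖u z‖ ≤ Mu) →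
        (∀ z ∈ sphere (0:ℂ) 1, z ≠ 1 → ‖u z‖^2 = ‖P z‖) →
        ∀ z ∈ ball (0:ℂ) 1, ‖u z ^ 2 / P z‖ ≤ 1 := by
      intro u Mu hud huc hubd husq
      apply key_max (C := Mu^2)
      · exact (hud.pow 2).div hPdiff.differentiableOn hPne
      · exact ((huc.mono Set.diff_subset).pow 2).div
          (hPcont.continuousOn.mono Set.diff_subset)
          (fun z hz => hPne' z hz.1 (by simpa using hz.2))
      · simp [hP1]
      · intro z hz hz1
        rw [norm_div, norm_pow]
        have h1 : ‖1 - z‖ ≤ ‖P z‖ := hPnorm z hz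
        have h0 : 0 < ‖1 - z‖ :=
          norm_pos_iff.mpr (sub_ne_zero.mpr (fun h => hz1 h.symm))
        apply div_le_div₀ (by positivity) ?_ h0 h1
        have := hubd z hz
        nlinarith [norm_nonneg (u z)]
      · intro z hz hz1
        have hPz : ‖P z‖ ≠ 0 :=
          norm_ne_zero_iff.mpr (hPne' z (sphere_subset_closedBall hz) hz1)
        rw [norm_div, norm_pow, husq z hz hz1, div_self hPz]
    have hb1 : ∀ z ∈ ball (0:ℂ) 1, ‖q1 z‖ ≤ 1 :=
      hkey f M hfd hfc hM (fun z hz hz1 => (hsq z hz hz1).1)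
    have hb2 : ∀ z ∈ ball (0:ℂ) 1, ‖q2 z‖ ≤ 1 :=
      hkey g M' hgd hgc hM' (fun z hz hz1 => (hsq z hz hz1).2)
    have hprod : ∀ z ∈ ball (0:ℂ) 1, q1 z * q2 z = 1 := by
      intro z hz
      have hPz := hPne z hz
      have hfgz := hfg z (ball_subset_closedBall hz)
      rw [hq1def, hq2def]
      simp only []
      rw [div_mul_div_comm, show f z^2 * g z^2 = (f z * g z)^2 by ring, hfgz]
      rw [show P z * P z = P z ^ 2 by ring]
      exact div_self (pow_ne_zero 2 hPz)
    have hnorm1 : ∀ z ∈ ball (0:ℂ) 1, ‖q1 z‖ = 1 := by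
      intro z hz
      have h1 := hb1 z hz
      have h2 := hb2 z hz
      have h3 : ‖q1 z‖ * ‖q2 z‖ = 1 := by rw [← norm_mul, hprod z hz, norm_one]
      nlinarith [norm_nonneg (q1 z), norm_nonneg (q2 z)]
    have hq1d : DifferentiableOn ℂ q1 (ball (0:ℂ) 1) :=
      (hfd.pow 2).div hPdiff.differentiableOn hPne
    have hmax : IsMaxOn (norm ∘ q1) (ball (0:ℂ) 1) 0 := by
      rw [isMaxOn_iff]
      intro x hx
      simp only [Function.comp_apply]
      rw [hnorm1 x hx, hnorm1 0 (mem_ball_self one_pos)]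
    have hconst := Complex.eqOn_of_isPreconnected_of_isMaxOn_norm
      (convex_ball (0:ℂ) 1).isPreconnected isOpen_ball hq1d (mem_ball_self one_pos) hmax
    set c := q1 0 with hcdef
    have hcnorm : ‖c‖ = 1 := hnorm1 0 (mem_ball_self one_pos)
    have hc0 : c ≠ 0 := by intro h; rw [h] at hcnorm; simp at hcnorm
    have hξne : ∀ z ∈ ball (0:ℂ) 1, ξ z ≠ 0 := by
      intro z hz h0
      have h1 : ξ z * ξ z = P z := xi_sq N z
      rw [h0, zero_mul] at h1
      exact hPne z hz h1.symm
    have hfsq : ∀ z ∈ ball (0:ℂ) 1, f z ^ 2 = c * (ξ z * ξ z) := by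
      intro z hz
      have h1 : q1 z = c := hconst hz
      rw [hq1def] at h1
      simp only [] at h1
      have h2 := (div_eq_iff (hPne z hz)).mp h1
      rw [h2, xi_sq N z]
    set μ := f 0 / ξ 0 with hμdef
    have hξ0 := hξne 0 (mem_ball_self one_pos)
    have hμsq : μ^2 = c := by
      rw [hμdef, div_pow, hfsq 0 (mem_ball_self one_pos),
        show (ξ 0)^2 = ξ 0 * ξ 0 from sq (ξ 0), mul_div_assoc,
        div_self (mul_ne_zero hξ0 hξ0), mul_one]
    have hμ0 : μ ≠ 0 := by
      intro h
      rw [h] at hμsq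
      simp at hμsq
      exact hc0 hμsq.symm
    have hμall : ∀ z ∈ ball (0:ℂ) 1, f z = μ * ξ z := by
      haveI : PreconnectedSpace (ball (0:ℂ) 1) :=
        Subtype.preconnectedSpace (convex_ball (0:ℂ) 1).isPreconnected
      set Φ : ball (0:ℂ) 1 → ℂ := fun x => f x / ξ x with hΦdef
      have hΦc : Continuous Φ :=
        ContinuousOn.restrict (hfd.continuousOn.div hξd.continuousOn hξne)
      have hΦsq : ∀ x : ball (0:ℂ) 1, (Φ x - μ) * (Φ x + μ) = 0 := by
        intro x
        have hξx := hξne x x.2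
        have h1 : (Φ x)^2 = c := by
          rw [hΦdef]
          simp only []
          rw [div_pow, hfsq x x.2,
            show (ξ (x:ℂ))^2 = ξ (x:ℂ) * ξ (x:ℂ) from sq _, mul_div_assoc,
            div_self (mul_ne_zero hξx hξx), mul_one]
        calc (Φ x - μ) * (Φ x + μ) = (Φ x)^2 - μ^2 := by ring
          _ = c - c := by rw [h1, hμsq]
          _ = 0 := sub_self c
      have hSc : IsClosed {x : ball (0:ℂ) 1 | Φ x = μ} :=
        isClosed_eq hΦc continuous_const
      have hSc' : IsClosed {x : ball (0:ℂ) 1 | Φ x = -μ} :=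
        isClosed_eq hΦc continuous_const
      have hSo : IsOpen {x : ball (0:ℂ) 1 | Φ x = μ} := by
        have hcompl : {x : ball (0:ℂ) 1 | Φ x = μ} = {x : ball (0:ℂ) 1 | Φ x = -μ}ᶜ := by
          ext x
          simp only [Set.mem_setOf_eq, Set.mem_compl_iff]
          constructor
          · intro h h'
            rw [h] at h'
            apply hμ0
            have h2 : (2:ℂ) * μ = 0 := by linear_combination h'
            simpa using (mul_eq_zero.mp h2).resolve_left (by norm_num)
          · intro h
            rcases mul_eq_zero.mp (hΦsq x) with h1 | h2
            · exact sub_eq_zero.mp h1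
            · exact absurd (eq_neg_of_add_eq_zero_left h2) h
        rw [hcompl]
        exact hSc'.isOpen_compl
      have huniv := (IsClopen.eq_univ ⟨hSc, hSo⟩ :
          {x : ball (0:ℂ) 1 | Φ x = μ}.Nonempty → _)
        ⟨⟨0, mem_ball_self one_pos⟩, rfl⟩
      intro z hz
      have hmem : (⟨z, hz⟩ : ball (0:ℂ) 1) ∈ {x : ball (0:ℂ) 1 | Φ x = μ} := by
        rw [huniv]; trivial
      have hΦz : f z / ξ z = μ := hmem
      rw [← hΦz, div_mul_cancel₀]
      exact hξne z hz
    have hμnorm : ‖μ‖ = 1 := by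
      have h1 : ‖μ‖^2 = ‖c‖ := by rw [← norm_pow, hμsq]
      rw [hcnorm] at h1
      have h2 : ‖μ‖ = 1 := by nlinarith [norm_nonneg μ]
      simpa using h2
    obtain ⟨θ, hθ⟩ := (Complex.norm_eq_one_iff μ).mp hμnorm
    refine ⟨θ, fun z hz => ?_⟩
    have hfz : f z = μ * ξ z := hμall z hz
    have hexpμ : Complex.exp (Complex.I * θ) = μ := by rw [mul_comm]; exact hθ
    have hξz := hξne z hz
    refine ⟨by rw [hfz, hexpμ], ?_⟩
    have h1 : f z * g z = ξ z * ξ z := by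
      rw [hfg z (ball_subset_closedBall hz), ← xi_sq N z]
    rw [hfz] at h1
    have hgz : g z = (ξ z * ξ z) / (μ * ξ z) := by
      rw [eq_div_iff (mul_ne_zero hμ0 hξz)]
      linear_combination h1
    rw [hgz, show Complex.exp (-(Complex.I)*(θ:ℂ)) = μ⁻¹ by
      rw [show -(Complex.I)*(θ:ℂ) = -(Complex.I*θ) by ring, Complex.exp_neg, hexpμ]]
    field_simp
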